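/- Every adequate numeral system possesses a storage operator: if d = d₀, d₁, … is a numeral system with successor S_d, zero test Z_d and predecessor P_d, then the term O_d = Θ H_d with H_d = λh.λn.λf.((Z_d n) (f d₀) (h (P_d n) (λx.f (S_d x)))) and Θ the Turing fixed-point combinator satisfies: for all n and all θ ≃_β d_n, (O_d θ f) head-reduces to (f (S_d^n d₀)). -/

import Mathlib

inductive Lam : Type
  | var : ℕ → Lam
  | app : Lam → Lam → Lam
  | lam : Lam → Lam
deriving DecidableEq

namespace Lam

/-- Lift (shift up by one) all de Bruijn indices ≥ d. -/
def lift (d : ℕ) : Lam → Lam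
  | var n => if n < d then var n else var (n + 1)
  | app u v => app (lift d u) (lift d v)
  | lam u => lam (lift (d + 1) u)

/-- Capture-avoiding substitution of s for the de Bruijn index d. -/
def subst (d : ℕ) (s : Lam) : Lam → Lam
  | var n => if n = d then s else if n < d then var n else var (n - 1)
  | app u v => app (subst d s u) (subst d s v)
  | lam u => lam (subst (d + 1) (lift 0 s) u)

/-- One-step β-reduction. -/
inductive Step : Lam → Lam → Prop
  | beta (u v : Lam) : Step (app (lam u) v) (subst 0 v u)
  | appL {u u' : Lam} (v : Lam) : Step u u' → Step (app u v) (app u' v)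
  | appR (u : Lam) {v v' : Lam} : Step v v' → Step (app u v) (app u v')
  | lam {u u' : Lam} : Step u u' → Step (lam u) (lam u')

/-- β-equivalence: the reflexive-symmetric-transitive closure of β-reduction. -/
inductive BetaEq : Lam → Lam → Prop
  | step {u v} : Step u v → BetaEq u v
  | refl (u) : BetaEq u u
  | symm {u v} : BetaEq u v → BetaEq v u
  | trans {u v w} : BetaEq u v → BetaEq v w → BetaEq u w

/-- One step of head reduction: contract the head redex. -/
inductive HeadStep : Lam → Lam → Prop
  | beta (u v : Lam) : HeadStep (app (lam u) v) (subst 0 v u)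
  | appL {u u' : Lam} (v : Lam) : HeadStep u u' → (∀ w, u ≠ lam w) →
      HeadStep (app u v) (app u' v)
  | lam {u u' : Lam} : HeadStep u u' → HeadStep (lam u) (lam u')

/-- `Heads u v`: u head-reduces to v in finitely many steps. -/
def Heads : Lam → Lam → Prop := Relation.ReflTransGen HeadStep

/-- A term is normal if it contains no β-redex. -/
def Normal (t : Lam) : Prop := ∀ u, ¬ Step t u

/-- All free de Bruijn indices of the term are < d. -/
def ClosedUnder : ℕ → Lam → Prop
  | d, var n => n < d
  | d, app u v => ClosedUnder d u ∧ ClosedUnder d v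
  | d, lam u => ClosedUnder (d + 1) u

/-- A term is closed if it has no free variables. -/
def Closed (t : Lam) : Prop := ClosedUnder 0 t

/-- The de Bruijn index i occurs free in the term. -/
def FreeIn : ℕ → Lam → Prop
  | i, var n => n = i
  | i, app u v => FreeIn i u ∨ FreeIn i v
  | i, lam u => FreeIn (i + 1) u

/-- n-fold application: (f^n x). -/
def iterApp : ℕ → Lam → Lam → Lam
  | 0, _, x => x
  | n + 1, f, x => app f (iterApp n f x)

/-- The n-th Church numeral λx.λf.(f^n x). -/
def church (n : ℕ) : Lam := lam (lam (iterApp n (var 0) (var 1)))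

/-- T = λx.λy.x -/
def Ttm : Lam := lam (lam (var 1))

/-- F = λx.λy.y -/
def Ftm : Lam := lam (lam (var 0))

end Lam

namespace Lam

/-- U = λx.λf.(f (x x f)). -/
def Uturing : Lam :=
  lam (lam (app (var 0) (app (app (var 1) (var 1)) (var 0))))

/-- Θ = (U U), the Turing fixed-point combinator. -/
def Theta : Lam := app Uturing Uturing

/-- H_d = λh.λn.λf.((Z_d n) (f d₀) (h (P_d n) (λx.f (S_d x)))). -/
def Hd (Sd Zd Pd d0 : Lam) : Lam :=
  lam (lam (lam
    (app
      (app (app Zd (var 1)) (app (var 0) d0))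
      (app (app (var 2) (app Pd (var 1)))
        (lam (app (var 1) (app Sd (var 0))))))))

/-- O_d = (Θ H_d). -/
def Od (Sd Zd Pd d0 : Lam) : Lam := app Theta (Hd Sd Zd Pd d0)
/-! ### de Bruijn algebra -/

theorem lift_lift (t : Lam) : ∀ i j, i ≤ j →
    lift i (lift j t) = lift (j + 1) (lift i t) := by
  induction t with
  | var n =>
    intro i j h; simp only [lift]
    split_ifs <;> (try simp only [lift, subst]) <;> (try split_ifs) <;>
      first | rfl | omega | (simp only [var.injEq]; omega) | (exfalso; omega)
  | app u v ihu ihv => intro i j h; simp [lift, ihu _ _ h, ihv _ _ h]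
  | lam u ih => intro i j h; simp [lift, ih (i+1) (j+1) (by omega)]

theorem lift_subst (t : Lam) : ∀ i j (s : Lam), i ≤ j →
    lift j (subst i s t) = subst i (lift j s) (lift (j + 1) t) := by
  induction t with
  | var n =>
    intro i j s h; simp only [lift, subst]
    split_ifs <;> (try simp only [lift, subst]) <;> (try split_ifs) <;>
      first | rfl | omega | (simp only [var.injEq]; omega) | (exfalso; omega)
  | app u v ihu ihv => intro i j s h; simp [lift, subst, ihu _ _ _ h, ihv _ _ _ h]
  | lam u ih =>
    intro i j s h
    simp only [lift, subst, ih (i+1) (j+1) (lift 0 s) (by omega)]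
    rw [lift_lift s 0 j (by omega)]

theorem lift_subst' (t : Lam) : ∀ i j (s : Lam), i ≤ j →
    lift i (subst j s t) = subst (j + 1) (lift i s) (lift i t) := by
  induction t with
  | var n =>
    intro i j s h; simp only [lift, subst]
    split_ifs <;> (try simp only [lift, subst]) <;> (try split_ifs) <;>
      first | rfl | omega | (simp only [var.injEq]; omega) | (exfalso; omega)
  | app u v ihu ihv => intro i j s h; simp [lift, subst, ihu _ _ _ h, ihv _ _ _ h]
  | lam u ih =>
    intro i j s h
    simp only [lift, subst, ih (i+1) (j+1) (lift 0 s) (by omega)]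
    rw [lift_lift s 0 i (by omega)]

theorem subst_lift_cancel (t : Lam) : ∀ i (s : Lam), subst i s (lift i t) = t := by
  induction t with
  | var n =>
    intro i s; simp only [lift, subst]
    split_ifs <;> (try simp only [lift, subst]) <;> (try split_ifs) <;>
      first | rfl | omega | (simp only [var.injEq]; omega) | (exfalso; omega)
  | app u v ihu ihv => intro i s; simp [lift, subst, ihu, ihv]
  | lam u ih => intro i s; simp [lift, subst, ih]

theorem subst_subst (t : Lam) : ∀ i j (v s : Lam), i ≤ j →
    subst j s (subst i v t) =
      subst i (subst j s v) (subst (j + 1) (lift i s) t) := by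
  induction t with
  | var n =>
    intro i j v s h; simp only [subst]
    split_ifs <;> (try simp only [lift, subst, subst_lift_cancel]) <;> (try split_ifs) <;>
      first | rfl | omega | (simp only [var.injEq]; omega) | (exfalso; omega)
  | app u v ihu ihv => intro i j v s h; simp [subst, ihu _ _ _ _ h, ihv _ _ _ _ h]
  | lam u ih =>
    intro i j v s h
    simp only [subst, ih (i+1) (j+1) (lift 0 v) (lift 0 s) (by omega)]
    rw [lift_subst' v 0 j s (by omega), lift_lift s 0 i (by omega)]

/-! ### Closedness -/

theorem closedUnder_mono : ∀ (t : Lam) {i j}, i ≤ j → ClosedUnder i t → ClosedUnder j t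
  | var n, i, j, h, hc => by simp only [ClosedUnder] at *; omega
  | app u v, i, j, h, hc => by
      simp only [ClosedUnder] at *
      exact ⟨closedUnder_mono u h hc.1, closedUnder_mono v h hc.2⟩
  | lam u, i, j, h, hc => by
      simp only [ClosedUnder] at *
      exact closedUnder_mono u (by omega) hc

theorem lift_closedUnder : ∀ (t : Lam) {i j}, i ≤ j → ClosedUnder i t → lift j t = t
  | var n, i, j, h, hc => by simp only [ClosedUnder] at hc; simp [lift]; omega
  | app u v, i, j, h, hc => by
      simp only [ClosedUnder] at hc
      simp [lift, lift_closedUnder u h hc.1, lift_closedUnder v h hc.2]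
  | lam u, i, j, h, hc => by
      simp only [ClosedUnder] at hc
      simp [lift, lift_closedUnder u (Nat.succ_le_succ h) hc]

theorem subst_closedUnder : ∀ (t : Lam) {i j} (s : Lam), i ≤ j → ClosedUnder i t → subst j s t = t
  | var n, i, j, s, h, hc => by
      simp only [ClosedUnder] at hc; simp only [subst]
      split_ifs <;> first | omega | rfl
  | app u v, i, j, s, h, hc => by
      simp only [ClosedUnder] at hc
      simp [subst, subst_closedUnder u s h hc.1, subst_closedUnder v s h hc.2]
  | lam u, i, j, s, h, hc => by
      simp only [ClosedUnder] at hc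
      simp [subst, subst_closedUnder u (lift 0 s) (Nat.succ_le_succ h) hc]

theorem lift_closed {t : Lam} (h : Closed t) (j : ℕ) : lift j t = t :=
  lift_closedUnder t (Nat.zero_le _) h

theorem subst_closed {t : Lam} (h : Closed t) (j : ℕ) (s : Lam) : subst j s t = t :=
  subst_closedUnder t s (Nat.zero_le _) h


/-! ### Multi-step reduction -/

def Steps : Lam → Lam → Prop := Relation.ReflTransGen Step

theorem Steps.appL {u u' : Lam} (v : Lam) (h : Steps u u') :
    Steps (app u v) (app u' v) :=
  Relation.ReflTransGen.lift (fun x => app x v) (fun _ _ hs => Step.appL v hs) _ _ h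

theorem Steps.appR (u : Lam) {v v' : Lam} (h : Steps v v') :
    Steps (app u v) (app u v') :=
  Relation.ReflTransGen.lift (fun x => app u x) (fun _ _ hs => Step.appR u hs) _ _ h

theorem Steps.lam {u u' : Lam} (h : Steps u u') : Steps (lam u) (lam u') :=
  Relation.ReflTransGen.lift (fun x => Lam.lam x) (fun _ _ hs => Step.lam hs) _ _ h

/-! ### Parallel reduction -/

inductive Par : Lam → Lam → Prop
  | var (n) : Par (var n) (var n)
  | app {u u' v v'} : Par u u' → Par v v' → Par (app u v) (app u' v')
  | lam {u u'} : Par u u' → Par (lam u) (lam u')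
  | beta {u u' v v'} : Par u u' → Par v v' → Par (app (lam u) v) (subst 0 v' u')

theorem Par.refl : ∀ t : Lam, Par t t
  | .var n => .var n
  | .app u v => .app (Par.refl u) (Par.refl v)
  | .lam u => .lam (Par.refl u)

theorem Par.of_step {u v : Lam} (h : Step u v) : Par u v := by
  induction h with
  | beta u v => exact Par.beta (Par.refl u) (Par.refl v)
  | appL v _ ih => exact Par.app ih (Par.refl v)
  | appR u _ ih => exact Par.app (Par.refl u) ih
  | lam _ ih => exact Par.lam ih

theorem Par.steps {u v : Lam} (h : Par u v) : Steps u v := by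
  induction h with
  | var n => exact Relation.ReflTransGen.refl
  | app _ _ ihu ihv => exact Relation.ReflTransGen.trans (Steps.appL _ ihu) (Steps.appR _ ihv)
  | lam _ ih => exact Steps.lam ih
  | beta _ _ ihu ihv =>
      exact Relation.ReflTransGen.tail
        (Relation.ReflTransGen.trans (Steps.appL _ (Steps.lam ihu)) (Steps.appR _ ihv))
        (Step.beta _ _)

theorem Par.lift {u v : Lam} (h : Par u v) : ∀ d, Par (lift d u) (lift d v) := by
  induction h with
  | var n => intro d; simp only [Lam.lift]; split_ifs <;> exact Par.refl _
  | app _ _ ihu ihv => intro d; exact Par.app (ihu d) (ihv d)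
  | lam _ ih => intro d; exact Par.lam (ih (d+1))
  | beta _ _ ihu ihv =>
      intro d
      simp only [Lam.lift]
      rw [lift_subst _ 0 d _ (Nat.zero_le _)]
      exact Par.beta (ihu (d+1)) (ihv d)

theorem Par.subst {u u' : Lam} (h : Par u u') :
    ∀ d {s s' : Lam}, Par s s' → Par (subst d s u) (subst d s' u') := by
  induction h with
  | var n =>
      intro d s s' hs; simp only [Lam.subst]
      split_ifs <;> first | exact hs | exact Par.refl _
  | app _ _ ihu ihv => intro d s s' hs; exact Par.app (ihu d hs) (ihv d hs)
  | lam _ ih => intro d s s' hs; exact Par.lam (ih (d+1) (hs.lift 0))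
  | beta _ _ ihu ihv =>
      intro d s s' hs
      simp only [Lam.subst]
      rw [subst_subst _ 0 d _ _ (Nat.zero_le _)]
      exact Par.beta (ihu (d+1) (hs.lift 0)) (ihv d hs)

/-- Complete development. -/
def cd : Lam → Lam
  | .var n => .var n
  | .lam u => .lam (cd u)
  | .app (.lam u) v => subst 0 (cd v) (cd u)
  | .app (.var n) v => .app (.var n) (cd v)
  | .app (.app a b) v => .app (cd (.app a b)) (cd v)

theorem Par.cd_triangle : ∀ {t u : Lam}, Par t u → Par u (cd t)
  | _, _, .var n => .var n
  | _, _, .lam p => .lam p.cd_triangle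
  | _, _, .beta p q => Par.subst p.cd_triangle 0 q.cd_triangle
  | _, _, .app (u := t1) (v := t2) p q => by
      cases t1 with
      | lam b =>
          cases p with
          | lam pb => exact .beta pb.cd_triangle q.cd_triangle
      | var n =>
          cases p with
          | var => exact .app (.var n) q.cd_triangle
      | app a b => exact .app p.cd_triangle q.cd_triangle

theorem Par.diamond {a b c : Lam} (h1 : Par a b) (h2 : Par a c) :
    ∃ e, Par b e ∧ Par c e :=
  ⟨cd a, h1.cd_triangle, h2.cd_triangle⟩

/-! ### Confluence -/

def ParS : Lam → Lam → Prop := Relation.ReflTransGen Par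

theorem ParS.steps {a b : Lam} (h : ParS a b) : Steps a b := by
  induction h with
  | refl => exact Relation.ReflTransGen.refl
  | tail _ hp ih => exact Relation.ReflTransGen.trans ih hp.steps

theorem Steps.parS {a b : Lam} (h : Steps a b) : ParS a b := by
  induction h with
  | refl => exact Relation.ReflTransGen.refl
  | tail _ hs ih => exact Relation.ReflTransGen.tail ih (Par.of_step hs)

theorem ParS.strip {a b c : Lam} (h1 : Par a b) (h2 : ParS a c) :
    ∃ e, ParS b e ∧ Par c e := by
  induction h2 with
  | refl => exact ⟨b, Relation.ReflTransGen.refl, h1⟩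
  | tail _ hp ih =>
      obtain ⟨e, he1, he2⟩ := ih
      obtain ⟨f, hf1, hf2⟩ := Par.diamond he2 hp
      exact ⟨f, Relation.ReflTransGen.tail he1 hf1, hf2⟩

theorem ParS.confluent {a b c : Lam} (h1 : ParS a b) (h2 : ParS a c) :
    ∃ e, ParS b e ∧ ParS c e := by
  induction h1 with
  | refl => exact ⟨c, h2, Relation.ReflTransGen.refl⟩
  | tail _ hp ih =>
      obtain ⟨e, he1, he2⟩ := ih
      obtain ⟨f, hf1, hf2⟩ := ParS.strip hp he1
      exact ⟨f, hf1, Relation.ReflTransGen.tail he2 hf2⟩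

theorem BetaEq.join {u v : Lam} (h : BetaEq u v) :
    ∃ w, Steps u w ∧ Steps v w := by
  induction h with
  | step hs => exact ⟨_, Relation.ReflTransGen.single hs, Relation.ReflTransGen.refl⟩
  | refl u => exact ⟨u, Relation.ReflTransGen.refl, Relation.ReflTransGen.refl⟩
  | symm _ ih => obtain ⟨w, h1, h2⟩ := ih; exact ⟨w, h2, h1⟩
  | trans _ _ ih1 ih2 =>
      obtain ⟨w1, h1, h2⟩ := ih1
      obtain ⟨w2, h3, h4⟩ := ih2
      obtain ⟨e, he1, he2⟩ := ParS.confluent h2.parS h3.parS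
      exact ⟨e, Relation.ReflTransGen.trans h1 he1.steps, Relation.ReflTransGen.trans h4 he2.steps⟩

theorem Normal.steps_eq {t u : Lam} (hn : Normal t) (h : Steps t u) : u = t := by
  induction h with
  | refl => rfl
  | tail hs hstep ih => subst ih; exact absurd hstep (hn _)

theorem BetaEq.steps_of_normal {u v : Lam} (h : BetaEq u v) (hv : Normal v) :
    Steps u v := by
  obtain ⟨w, h1, h2⟩ := h.join
  rwa [hv.steps_eq h2] at h1

theorem BetaEq.appL {u u' : Lam} (v : Lam) (h : BetaEq u u') :
    BetaEq (app u v) (app u' v) := by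
  induction h with
  | step hs => exact BetaEq.step (Step.appL v hs)
  | refl u => exact BetaEq.refl _
  | symm _ ih => exact ih.symm
  | trans _ _ ih1 ih2 => exact ih1.trans ih2

theorem BetaEq.appR (u : Lam) {v v' : Lam} (h : BetaEq v v') :
    BetaEq (app u v) (app u v') := by
  induction h with
  | step hs => exact BetaEq.step (Step.appR u hs)
  | refl u => exact BetaEq.refl _
  | symm _ ih => exact ih.symm
  | trans _ _ ih1 ih2 => exact ih1.trans ih2

theorem normal_Ttm : Normal Ttm := by
  intro u h
  cases h with
  | lam h => cases h with
    | lam h => cases h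

theorem normal_Ftm : Normal Ftm := by
  intro u h
  cases h with
  | lam h => cases h with
    | lam h => cases h

/-! ### Kashima-style standardization -/

/-- One step of weak head (spine) reduction, no side conditions. -/
inductive Hap1 : Lam → Lam → Prop
  | beta (u v) : Hap1 (app (lam u) v) (subst 0 v u)
  | appL {u u'} (v) : Hap1 u u' → Hap1 (app u v) (app u' v)

def Hap : Lam → Lam → Prop := Relation.ReflTransGen Hap1

theorem Hap1.isApp {u v : Lam} (h : Hap1 u v) : ∃ a b, u = app a b := by
  cases h with
  | beta u v => exact ⟨_, _, rfl⟩
  | appL v _ => exact ⟨_, _, rfl⟩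

theorem Hap1.headStep {u v : Lam} (h : Hap1 u v) : HeadStep u v := by
  induction h with
  | beta u v => exact HeadStep.beta u v
  | appL v h ih =>
      obtain ⟨a, b, rfl⟩ := h.isApp
      exact HeadStep.appL v ih (fun w hw => by cases hw)

theorem Hap.heads {u v : Lam} (h : Hap u v) : Heads u v :=
  Relation.ReflTransGen.mono (fun _ _ hs => Hap1.headStep hs) _ _ h

theorem Hap.appL {u u' : Lam} (v : Lam) (h : Hap u u') : Hap (app u v) (app u' v) :=
  Relation.ReflTransGen.lift (fun x => app x v) (fun _ _ hs => Hap1.appL v hs) _ _ h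

theorem Hap1.subst {u u' : Lam} (h : Hap1 u u') (d : ℕ) (s : Lam) :
    Hap1 (subst d s u) (subst d s u') := by
  induction h with
  | beta a b =>
      have : Lam.subst d s (Lam.subst 0 b a) =
          Lam.subst 0 (Lam.subst d s b) (Lam.subst (d+1) (Lam.lift 0 s) a) :=
        subst_subst a 0 d b s (Nat.zero_le _)
      rw [this]
      exact Hap1.beta _ _
  | appL v _ ih => exact Hap1.appL _ ih

theorem Hap.subst {u u' : Lam} (h : Hap u u') (d : ℕ) (s : Lam) :
    Hap (subst d s u) (subst d s u') :=
  Relation.ReflTransGen.lift (fun x => Lam.subst d s x) (fun _ _ hs => Hap1.subst hs d s) _ _ h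

theorem Hap1.lift {u u' : Lam} (h : Hap1 u u') (d : ℕ) :
    Hap1 (lift d u) (lift d u') := by
  induction h with
  | beta a b =>
      have : Lam.lift d (Lam.subst 0 b a) = Lam.subst 0 (Lam.lift d b) (Lam.lift (d+1) a) :=
        lift_subst a 0 d b (Nat.zero_le _)
      rw [this]
      exact Hap1.beta _ _
  | appL v _ ih => exact Hap1.appL _ ih

theorem Hap.lift {u u' : Lam} (h : Hap u u') (d : ℕ) :
    Hap (lift d u) (lift d u') :=
  Relation.ReflTransGen.lift (fun x => Lam.lift d x) (fun _ _ hs => Hap1.lift hs d) _ _ h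

/-- Standard reduction. -/
inductive St : Lam → Lam → Prop
  | var {M n} : Hap M (var n) → St M (var n)
  | lam {M u u'} : Hap M (lam u) → St u u' → St M (lam u')
  | app {M u v u' v'} : Hap M (app u v) → St u u' → St v v' → St M (app u' v')

theorem St.hap_pre {M N P : Lam} (h : Hap M N) (hs : St N P) : St M P := by
  cases hs with
  | var h2 => exact St.var (Relation.ReflTransGen.trans h h2)
  | lam h2 hb => exact St.lam (Relation.ReflTransGen.trans h h2) hb
  | app h2 hu hv => exact St.app (Relation.ReflTransGen.trans h h2) hu hv

theorem St.refl : ∀ t : Lam, St t t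
  | .var n => St.var Relation.ReflTransGen.refl
  | .lam u => St.lam Relation.ReflTransGen.refl (St.refl u)
  | .app u v => St.app Relation.ReflTransGen.refl (St.refl u) (St.refl v)

theorem St.lift_ {u u' : Lam} (h : St u u') : ∀ d, St (lift d u) (lift d u') := by
  induction h with
  | var h => intro d; exact St.hap_pre (h.lift d) (St.refl _)
  | lam h _ ih =>
      intro d
      exact St.lam (by simpa [Lam.lift] using h.lift d) (ih (d+1))
  | app h _ _ ihu ihv =>
      intro d
      exact St.app (by simpa [Lam.lift] using h.lift d) (ihu d) (ihv d)

theorem St.subst_ {u u' : Lam} (h : St u u') :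
    ∀ d {s s' : Lam}, St s s' → St (subst d s u) (subst d s' u') := by
  induction h with
  | var h =>
      intro d s s' hs
      rename_i M n
      have h2 : Hap (Lam.subst d s M) (Lam.subst d s (Lam.var n)) := h.subst d s
      by_cases hn : n = d
      · subst hn
        simp only [Lam.subst, if_pos rfl] at h2 ⊢
        exact St.hap_pre h2 hs
      · simp only [Lam.subst, if_neg hn] at h2 ⊢
        split_ifs at h2 ⊢ <;> exact St.hap_pre h2 (St.refl _)
  | lam h _ ih =>
      intro d s s' hs
      exact St.lam (by simpa [Lam.subst] using h.subst d s) (ih (d+1) (hs.lift_ 0))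
  | app h _ _ ihu ihv =>
      intro d s s' hs
      exact St.app (by simpa [Lam.subst] using h.subst d s) (ihu d hs) (ihv d hs)

theorem St.step {M N P : Lam} (h : St M N) (hs : Step N P) : St M P := by
  induction h generalizing P with
  | var h => cases hs
  | lam h hb ih =>
      cases hs with
      | lam hs2 => exact St.lam h (ih hs2)
  | app h hu hv ihu ihv =>
      cases hs with
      | beta b v =>
          cases hu with
          | lam h2 hb =>
              have hM := Relation.ReflTransGen.trans h (Hap.appL _ h2)
              have hM2 := Relation.ReflTransGen.tail hM (Hap1.beta _ _)
              exact St.hap_pre hM2 (St.subst_ hb 0 hv)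
      | appL v hs2 => exact St.app h (ihu hs2) hv
      | appR u hs2 => exact St.app h hu (ihv hs2)

theorem Steps.st {M N : Lam} (h : Steps M N) : St M N := by
  induction h with
  | refl => exact St.refl M
  | tail _ hs ih => exact ih.step hs

/-! ### Selector lemmas -/

theorem st_T_sel {C : Lam} (h : St C Ttm) (A B : Lam) :
    Hap (app (app C A) B) A := by
  cases h with
  | lam h1 hb =>
    rename_i u
    cases hb with
    | lam h2 hb2 =>
      rename_i u2
      cases hb2 with
      | var h3 =>
        have s1 : Hap (app (app C A) B) (app (app (Lam.lam u) A) B) :=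
          Hap.appL B (Hap.appL A h1)
        have s2 : Hap1 (app (app (Lam.lam u) A) B) (app (Lam.subst 0 A u) B) :=
          Hap1.appL B (Hap1.beta u A)
        have s3 : Hap (Lam.subst 0 A u) (Lam.lam (Lam.subst 1 (Lam.lift 0 A) u2)) := by
          simpa [Lam.subst] using h2.subst 0 A
        have s4 : Hap1 (app (Lam.lam (Lam.subst 1 (Lam.lift 0 A) u2)) B)
            (Lam.subst 0 B (Lam.subst 1 (Lam.lift 0 A) u2)) := Hap1.beta _ _
        have s5 : Hap (Lam.subst 0 B (Lam.subst 1 (Lam.lift 0 A) u2)) A := by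
          simpa [Lam.subst, subst_lift_cancel] using (h3.subst 1 (Lam.lift 0 A)).subst 0 B
        exact (((s1.tail s2).trans (Hap.appL B s3)).tail s4).trans s5

theorem st_F_sel {C : Lam} (h : St C Ftm) (A B : Lam) :
    Hap (app (app C A) B) B := by
  cases h with
  | lam h1 hb =>
    rename_i u
    cases hb with
    | lam h2 hb2 =>
      rename_i u2
      cases hb2 with
      | var h3 =>
        have s1 : Hap (app (app C A) B) (app (app (Lam.lam u) A) B) :=
          Hap.appL B (Hap.appL A h1)
        have s2 : Hap1 (app (app (Lam.lam u) A) B) (app (Lam.subst 0 A u) B) :=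
          Hap1.appL B (Hap1.beta u A)
        have s3 : Hap (Lam.subst 0 A u) (Lam.lam (Lam.subst 1 (Lam.lift 0 A) u2)) := by
          simpa [Lam.subst] using h2.subst 0 A
        have s4 : Hap1 (app (Lam.lam (Lam.subst 1 (Lam.lift 0 A) u2)) B)
            (Lam.subst 0 B (Lam.subst 1 (Lam.lift 0 A) u2)) := Hap1.beta _ _
        have s5 : Hap (Lam.subst 0 B (Lam.subst 1 (Lam.lift 0 A) u2)) B := by
          simpa [Lam.subst] using (h3.subst 1 (Lam.lift 0 A)).subst 0 B
        exact (((s1.tail s2).trans (Hap.appL B s3)).tail s4).trans s5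

/-! ### Closedness of the combinators -/

theorem closed_U : Closed Uturing := by
  simp [Closed, Uturing, ClosedUnder]

theorem closed_Theta : Closed Theta := by
  exact ⟨closed_U, closed_U⟩

theorem closed_Hd {Sd Zd Pd d0 : Lam} (hS : Closed Sd) (hZ : Closed Zd)
    (hP : Closed Pd) (h0 : Closed d0) : Closed (Hd Sd Zd Pd d0) := by
  simp only [Closed, Hd, ClosedUnder]
  refine ⟨⟨⟨closedUnder_mono Zd (by omega) hZ, by omega⟩, by omega,
    closedUnder_mono d0 (by omega) h0⟩, ⟨by omega, closedUnder_mono Pd (by omega) hP, by omega⟩,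
    by omega, closedUnder_mono Sd (by omega) hS, by omega⟩

theorem closed_Od {Sd Zd Pd d0 : Lam} (hS : Closed Sd) (hZ : Closed Zd)
    (hP : Closed Pd) (h0 : Closed d0) : Closed (Od Sd Zd Pd d0) :=
  ⟨closed_Theta, closed_Hd hS hZ hP h0⟩

/-! ### The machine steps of O_d -/

/-- λx. (g (S_d x)) -/
def wrapT (Sd g : Lam) : Lam := lam (app (lift 0 g) (app Sd (var 0)))

def wrapN (Sd : Lam) : ℕ → Lam → Lam
  | 0, g => g
  | n + 1, g => wrapN Sd n (wrapT Sd g)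

theorem unwind (Sd : Lam) (hS : Closed Sd) :
    ∀ (n : ℕ) (g X : Lam), Hap (app (wrapN Sd n g) X) (app g (iterApp n Sd X)) := by
  intro n
  induction n with
  | zero => intro g X; exact Relation.ReflTransGen.refl
  | succ n ih =>
      intro g X
      have h1 : Hap (app (wrapN Sd (n+1) g) X) (app (wrapT Sd g) (iterApp n Sd X)) :=
        ih (wrapT Sd g) X
      have h2 : Hap1 (app (wrapT Sd g) (iterApp n Sd X))
          (app g (app Sd (iterApp n Sd X))) := by
        have := Hap1.beta (app (lift 0 g) (app Sd (var 0))) (iterApp n Sd X)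
        simpa [wrapT, Lam.subst, subst_lift_cancel, subst_closed hS] using this
      exact h1.tail h2

theorem front {Sd Zd Pd d0 : Lam} (hS : Closed Sd) (hZ : Closed Zd)
    (hP : Closed Pd) (h0 : Closed d0) (θ g : Lam) :
    Hap (app (app (Od Sd Zd Pd d0) θ) g)
      (app (app (app Zd θ) (app g d0))
        (app (app (Od Sd Zd Pd d0) (app Pd θ)) (wrapT Sd g))) := by
  have hHcl : Closed (Hd Sd Zd Pd d0) := closed_Hd hS hZ hP h0
  have hOdcl : Closed (Od Sd Zd Pd d0) := closed_Od hS hZ hP h0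
  -- step 1 : Θ ▹ λf. f (Θ f)
  have e1 : Hap1 Theta (lam (app (var 0) (app Theta (var 0)))) := by
    have := Hap1.beta (lam (app (var 0) (app (app (var 1) (var 1)) (var 0)))) Uturing
    simpa [Od, Theta, Uturing, Hd, wrapT, Lam.subst, Lam.lift, subst_lift_cancel, subst_closed hS, subst_closed hZ, subst_closed hP, subst_closed h0, lift_closed hS, lift_closed hZ, lift_closed hP, lift_closed h0] using this
  -- step 2 : (λf. f (Θ f)) H ▹ H (Θ H)
  have e2 : Hap1 (app (lam (app (var 0) (app Theta (var 0)))) (Hd Sd Zd Pd d0))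
      (app (Hd Sd Zd Pd d0) (Od Sd Zd Pd d0)) := by
    have := Hap1.beta (app (var 0) (app Theta (var 0))) (Hd Sd Zd Pd d0)
    simpa [Od, Theta, Uturing, Hd, wrapT, Lam.subst, Lam.lift, subst_lift_cancel, subst_closed hS, subst_closed hZ, subst_closed hP, subst_closed h0, lift_closed hS, lift_closed hZ, lift_closed hP, lift_closed h0] using this
  -- step 3 : H (Θ H) ▹ λn.λf. …
  have e3 : Hap1 (app (Hd Sd Zd Pd d0) (Od Sd Zd Pd d0))
      (lam (lam (app
        (app (app Zd (var 1)) (app (var 0) d0))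
        (app (app (Od Sd Zd Pd d0) (app Pd (var 1)))
          (lam (app (var 1) (app Sd (var 0)))))))) := by
    have := Hap1.beta (lam (lam
      (app (app (app Zd (var 1)) (app (var 0) d0))
        (app (app (var 2) (app Pd (var 1))) (lam (app (var 1) (app Sd (var 0))))))))
      (Od Sd Zd Pd d0)
    simpa [Od, Theta, Uturing, Hd, wrapT, Lam.subst, Lam.lift, subst_lift_cancel, subst_closed hS, subst_closed hZ, subst_closed hP, subst_closed h0, lift_closed hS, lift_closed hZ, lift_closed hP, lift_closed h0] using this
  -- step 4 : apply to θ
  have e4 : Hap1 (app (lam (lam (app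
        (app (app Zd (var 1)) (app (var 0) d0))
        (app (app (Od Sd Zd Pd d0) (app Pd (var 1)))
          (lam (app (var 1) (app Sd (var 0)))))))) θ)
      (lam (app
        (app (app Zd (lift 0 θ)) (app (var 0) d0))
        (app (app (Od Sd Zd Pd d0) (app Pd (lift 0 θ)))
          (lam (app (var 1) (app Sd (var 0))))))) := by
    have := Hap1.beta (lam (app
        (app (app Zd (var 1)) (app (var 0) d0))
        (app (app (Od Sd Zd Pd d0) (app Pd (var 1)))
          (lam (app (var 1) (app Sd (var 0))))))) θ
    simpa [Od, Theta, Uturing, Hd, wrapT, Lam.subst, Lam.lift, subst_lift_cancel, subst_closed hS, subst_closed hZ, subst_closed hP, subst_closed h0, lift_closed hS, lift_closed hZ, lift_closed hP, lift_closed h0] using this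
  -- step 5 : apply to g
  have e5 : Hap1 (app (lam (app
        (app (app Zd (lift 0 θ)) (app (var 0) d0))
        (app (app (Od Sd Zd Pd d0) (app Pd (lift 0 θ)))
          (lam (app (var 1) (app Sd (var 0))))))) g)
      (app (app (app Zd θ) (app g d0))
        (app (app (Od Sd Zd Pd d0) (app Pd θ)) (wrapT Sd g))) := by
    have := Hap1.beta (app
        (app (app Zd (lift 0 θ)) (app (var 0) d0))
        (app (app (Od Sd Zd Pd d0) (app Pd (lift 0 θ)))
          (lam (app (var 1) (app Sd (var 0)))))) g
    simpa [Od, Theta, Uturing, Hd, wrapT, Lam.subst, Lam.lift, subst_lift_cancel, subst_closed hS, subst_closed hZ, subst_closed hP, subst_closed h0, lift_closed hS, lift_closed hZ, lift_closed hP, lift_closed h0] using this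
  refine Relation.ReflTransGen.head (Hap1.appL g (Hap1.appL θ (Hap1.appL (Hd Sd Zd Pd d0) e1)))
    (Relation.ReflTransGen.head (Hap1.appL g (Hap1.appL θ e2))
      (Relation.ReflTransGen.head (Hap1.appL g (Hap1.appL θ e3))
        (Relation.ReflTransGen.head (Hap1.appL g e4)
          (Relation.ReflTransGen.head e5 Relation.ReflTransGen.refl))))

/-! ### The main induction -/

theorem mainG (d : ℕ → Lam) (Sd Zd Pd : Lam)
    (hScl : Closed Sd) (hZcl : Closed Zd) (hPcl : Closed Pd) (h0cl : Closed (d 0))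
    (hZ0 : BetaEq (app Zd (d 0)) Ttm)
    (hZs : ∀ n, BetaEq (app Zd (d (n + 1))) Ftm)
    (hP : ∀ n, BetaEq (app Pd (d (n + 1))) (d n)) :
    ∀ (n : ℕ) (θ g : Lam), BetaEq θ (d n) →
      Hap (app (app (Od Sd Zd Pd (d 0)) θ) g) (app (wrapN Sd n g) (d 0)) := by
  intro n
  induction n with
  | zero =>
      intro θ g hθ
      have h1 := front hScl hZcl hPcl h0cl θ g
      have hz : BetaEq (app Zd θ) Ttm := (BetaEq.appR Zd hθ).trans hZ0
      have h2 := st_T_sel ((hz.steps_of_normal normal_Ttm).st) (app g (d 0))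
        (app (app (Od Sd Zd Pd (d 0)) (app Pd θ)) (wrapT Sd g))
      exact h1.trans h2
  | succ n ih =>
      intro θ g hθ
      have h1 := front hScl hZcl hPcl h0cl θ g
      have hz : BetaEq (app Zd θ) Ftm := (BetaEq.appR Zd hθ).trans (hZs n)
      have h2 := st_F_sel ((hz.steps_of_normal normal_Ftm).st) (app g (d 0))
        (app (app (Od Sd Zd Pd (d 0)) (app Pd θ)) (wrapT Sd g))
      have hp : BetaEq (app Pd θ) (d n) := (BetaEq.appR Pd hθ).trans (hP n)
      have h3 := ih (app Pd θ) (wrapT Sd g) hp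
      exact (h1.trans h2).trans h3
/-- Every adequate numeral system possesses a storage operator: for every
numeral system d with successor S_d, zero test Z_d and predecessor P_d, the
term O_d = (Θ H_d) satisfies, for all n, all θ ≃_β dₙ and every variable f
not free in θ : (O_d θ f) ≻ (f (S_dⁿ d₀)). -/
theorem adequate_numeral_system_storage_operator
    (d : ℕ → Lam) (Sd Zd Pd : Lam)
    (hdnorm : ∀ n, Normal (d n)) (hdcl : ∀ n, Closed (d n))
    (hddist : ∀ m n, m ≠ n → d m ≠ d n)
    (hScl : Closed Sd) (hZcl : Closed Zd) (hPcl : Closed Pd)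
    (hS : ∀ n, BetaEq (app Sd (d n)) (d (n + 1)))
    (hZ0 : BetaEq (app Zd (d 0)) Ttm)
    (hZs : ∀ n, BetaEq (app Zd (d (n + 1))) Ftm)
    (hP : ∀ n, BetaEq (app Pd (d (n + 1))) (d n)) :
    ∀ (n : ℕ) (θ : Lam), BetaEq θ (d n) → ∀ i : ℕ, ¬ FreeIn i θ →
      Heads (app (app (Od Sd Zd Pd (d 0)) θ) (var i))
        (app (var i) (iterApp n Sd (d 0))) := by
  intro n θ hθ i _
  have h1 := mainG d Sd Zd Pd hScl hZcl hPcl (hdcl 0) hZ0 hZs hP n θ (var i) hθ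
  have h2 := unwind Sd hScl n (var i) (d 0)
  exact Hap.heads (h1.trans h2)

end Lam
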